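/- Let P_0,...,P_k be a W-consistent partition of the union automaton, and let v ≠ v' be nodes in the same block with λ(v)=λ(v'). Let (ℓ,m) and (ℓ',m') be their minmax pairs: ℓ (resp. m) is the smallest (resp. largest) block index from which an edge reaches v, similarly ℓ',m' for v'. If not all of ℓ=m=ℓ'=m' hold, then: m ≤ ℓ' implies v < v' in every Wheeler C-order, and m' ≤ ℓ implies v > v' in every Wheeler C-order. Moreover, if neither m ≤ ℓ' nor m' ≤ ℓ holds, then no Wheeler C-order of the union automaton exists. -/
import Mathlib


section

variable {V A : Type}

def StrictTotal (r : V → V → Prop) : Prop :=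
  (∀ x, ¬ r x x) ∧ (∀ x y z, r x y → r y z → r x z) ∧
  (∀ x y, x ≠ y → r x y ∨ r y x)

def IsWheelerOrder [LinearOrder A] (E : V → V → A → Prop) (r : V → V → Prop) : Prop :=
  StrictTotal r ∧
  (∀ v w, (∀ u a, ¬ E u v a) → (∃ u a, E u w a) → r v w) ∧
  (∀ u v a u' v' a', E u v a → E u' v' a' →
    (a < a' → r v v') ∧ (a = a' → r u u' → r v v' ∨ v = v'))

def CompatSeq (f : ℕ → V) (n : ℕ) (r : V → V → Prop) : Prop :=
  ∀ i j, i < j → j < n → r (f i) (f j)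

def IsWheelerCOrder [LinearOrder A] (E : V → V → A → Prop)
    (f0 : ℕ → V) (n0 : ℕ) (f1 : ℕ → V) (n1 : ℕ) (r : V → V → Prop) : Prop :=
  IsWheelerOrder E r ∧ CompatSeq f0 n0 r ∧ CompatSeq f1 n1 r

def WConsistent [LinearOrder A] (E : V → V → A → Prop)
    (f0 : ℕ → V) (n0 : ℕ) (f1 : ℕ → V) (n1 : ℕ)
    (P : ℕ → Set V) (k : ℕ) : Prop :=
  ∀ r, IsWheelerCOrder E f0 n0 f1 n1 r →
    ∀ i j x y, i < j → j ≤ k → x ∈ P i → y ∈ P j → r x y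

/-- `(ℓ,m)` is the minmax pair of `v` w.r.t. the partition `P`: `ℓ` (resp. `m`)
is the smallest (resp. largest) block index from which an edge reaches `v`. -/
def IsMinmax [LinearOrder A] (E : V → V → A → Prop) (P : ℕ → Set V)
    (v : V) (l m : ℕ) : Prop :=
  (∃ u ∈ P l, ∃ a, E u v a) ∧ (∃ u ∈ P m, ∃ a, E u v a) ∧
  (∀ i, (∃ u ∈ P i, ∃ a, E u v a) → l ≤ i ∧ i ≤ m)

/-- Lemma 7 of the paper.  Let `v ≠ v'` be in the same block of a W-consistent
partition with the same incoming label, with minmax pairs `(ℓ,m)` and `(ℓ',m')`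
not all equal.  Then `m ≤ ℓ'` forces `v < v'` and `m' ≤ ℓ` forces `v' < v` in
every Wheeler C-order; and if neither holds, no Wheeler C-order exists. -/
theorem stmt_8 [LinearOrder A] (E : V → V → A → Prop)
    (f0 : ℕ → V) (n0 : ℕ) (f1 : ℕ → V) (n1 : ℕ)
    (P : ℕ → Set V) (k : ℕ)
    (hW : WConsistent E f0 n0 f1 n1 P k)
    (h : ℕ) (hhk : h ≤ k) (v v' : V) (hne : v ≠ v')
    (hv : v ∈ P h) (hv' : v' ∈ P h)
    (a : A)
    (hlabv : ∀ u b, E u v b → b = a) (hlabv' : ∀ u b, E u v' b → b = a)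
    (l m l' m' : ℕ) (hlmk : m ≤ k) (hlmk' : m' ≤ k)
    (hmm : IsMinmax E P v l m) (hmm' : IsMinmax E P v' l' m')
    (hnotall : ¬ (l = m ∧ m = l' ∧ l' = m')) :
    ((m ≤ l' → ∀ r, IsWheelerCOrder E f0 n0 f1 n1 r → r v v') ∧
     (m' ≤ l → ∀ r, IsWheelerCOrder E f0 n0 f1 n1 r → r v' v) ∧
     (¬ (m ≤ l') → ¬ (m' ≤ l) →
        ¬ ∃ r, IsWheelerCOrder E f0 n0 f1 n1 r)) := by
  have hlm : l ≤ m := (hmm.2.2 l hmm.1).2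
  have hlm' : l' ≤ m' := (hmm'.2.2 l' hmm'.1).2
  have step : ∀ (x y : V), x ≠ y → (∀ u b, E u x b → b = a) →
      (∀ u b, E u y b → b = a) → ∀ i j, i < j → j ≤ k →
      (∃ u ∈ P i, ∃ b, E u x b) → (∃ u ∈ P j, ∃ b, E u y b) →
      ∀ r, IsWheelerCOrder E f0 n0 f1 n1 r → r x y := by
    rintro x y hxy hlx hly i j hij hjk ⟨u, hu, b, hE⟩ ⟨u', hu', b', hE'⟩ r hr
    have hb := hlx u b hE
    have hb' := hly u' b' hE'
    have huu' : r u u' := hW r hr i j u u' hij hjk hu hu'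
    have := (hr.1.2.2 u x b u' y b' hE hE').2 (hb.trans hb'.symm) huu'
    tauto
  refine ⟨?_, ?_, ?_⟩
  · intro hml' r hr
    rcases lt_or_eq_of_le hml' with hlt | heq
    · exact step v v' hne hlabv hlabv' m l' hlt (le_trans hlm' hlmk') hmm.2.1 hmm'.1 r hr
    · rcases (show l < m ∨ l' < m' by omega) with hc | hc
      · exact step v v' hne hlabv hlabv' l l' (by omega) (le_trans hlm' hlmk') hmm.1 hmm'.1 r hr
      · exact step v v' hne hlabv hlabv' m m' (by omega) hlmk' hmm.2.1 hmm'.2.1 r hr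
  · intro hml r hr
    rcases lt_or_eq_of_le hml with hlt | heq
    · exact step v' v hne.symm hlabv' hlabv m' l hlt (le_trans hlm hlmk) hmm'.2.1 hmm.1 r hr
    · rcases (show l' < m' ∨ l < m by omega) with hc | hc
      · exact step v' v hne.symm hlabv' hlabv l' l (by omega) (le_trans hlm hlmk) hmm'.1 hmm.1 r hr
      · exact step v' v hne.symm hlabv' hlabv m' m (by omega) hlmk hmm'.2.1 hmm.2.1 r hr
  · rintro h1 h2 ⟨r, hr⟩
    have hvv' : r v v' :=
      step v v' hne hlabv hlabv' l m' (by omega) hlmk' hmm.1 hmm'.2.1 r hr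
    have hv'v : r v' v :=
      step v' v hne.symm hlabv' hlabv l' m (by omega) hlmk hmm'.1 hmm.2.1 r hr
    exact hr.1.1.1 v (hr.1.1.2.1 v v' v hvv' hv'v)


end
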